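/- For any d, t ∈ ℕ there exists r ∈ ℕ such that for every coloring c : (𝒫{1,…,r})^d → {1,…,t} there exist sets γ, α_1, …, α_d ⊆ {1,…,r} with γ nonempty and γ ∩ α_i = ∅ for each 1 ≤ i ≤ d, such that c is constant on the set { (α_1 ∪ η_1, …, α_d ∪ η_d) : (η_1,…,η_d) ∈ {∅, γ}^d }. -/

import Mathlib

open Set

/-- **Corollary of the Hales–Jewett theorem.** For any `d, t` there is `r` such that any
`t`-coloring of `(𝒫{1,…,r})^d` admits sets `γ, α₁, …, α_d ⊆ {1,…,r}` with `γ` nonempty and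
disjoint from each `αᵢ`, such that all tuples `(α₁ ∪ η₁, …, α_d ∪ η_d)` with each
`ηᵢ ∈ {∅, γ}` get the same color. -/
theorem hales_jewett_powerset (d t : ℕ) :
    ∃ r : ℕ, ∀ c : (Fin d → Finset (Fin r)) → Fin t,
      ∃ (γ : Finset (Fin r)) (α : Fin d → Finset (Fin r)),
        γ.Nonempty ∧ (∀ i, Disjoint γ (α i)) ∧
        ∃ col : Fin t, ∀ η : Fin d → Finset (Fin r),
          (∀ i, η i = ∅ ∨ η i = γ) → c (fun i => α i ∪ η i) = col := by
  obtain ⟨ι, _inst, hι⟩ :=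
    Combinatorics.Line.exists_mono_in_high_dimension (Fin d → Bool) (Fin t)
  refine ⟨Fintype.card ι, fun c => ?_⟩
  set e : ι ≃ Fin (Fintype.card ι) := Fintype.equivFin ι with he
  set C : (ι → (Fin d → Bool)) → Fin t :=
    fun f => c (fun i => Finset.univ.filter (fun j => f (e.symm j) i = true)) with hC
  obtain ⟨l, col, hcol⟩ := hι C
  set γ : Finset (Fin (Fintype.card ι)) :=
    Finset.univ.filter (fun j => (l.idxFun (e.symm j)).isNone = true) with hγ
  set α : Fin d → Finset (Fin (Fintype.card ι)) :=
    fun i => Finset.univ.filter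
      (fun j => (Option.rec false (fun b => b i) (l.idxFun (e.symm j)) : Bool) = true) with hα
  refine ⟨γ, α, ?_, ?_, col, ?_⟩
  · obtain ⟨k, hk⟩ := l.proper
    exact ⟨e k, by simp [hγ, hk]⟩
  · intro i
    rw [Finset.disjoint_left]
    intro j hj hj'
    simp only [hγ, hα, Finset.mem_filter, Finset.mem_univ, true_and] at hj hj'
    cases h : l.idxFun (e.symm j) <;> simp [h] at hj hj'
  · intro η hη
    set a : Fin d → Bool := fun i => decide (η i = γ) with ha
    have key := hcol a
    rw [hC] at key
    convert key using 2
    funext i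
    ext j
    have hjcases := hη i
    simp only [Combinatorics.Line.coe_apply]
    cases h : l.idxFun (e.symm j) with
    | none =>
      have hjγ : j ∈ γ := by simp [hγ, h]
      simp only [h, Option.getD_none, Finset.mem_union, Finset.mem_filter,
        Finset.mem_univ, true_and, ha]
      have hjα : j ∉ α i := by simp [hα, h]
      rcases hjcases with h' | h'
      · have hne : ¬ (∅ : Finset (Fin (Fintype.card ι))) = γ := by
          intro hh; exact Finset.notMem_empty j (hh ▸ hjγ)
        simp [h', hjα, hne]
      · simp [h', hjα, hjγ]
    | some b =>
      have hjγ : j ∉ γ := by simp [hγ, h]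
      have hjη : j ∉ η i := by rcases hjcases with h' | h' <;> simp [h', hjγ]
      erw [Finset.mem_filter]
      simp [h, hα, hjη]
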